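/- arXiv:2505.20493 — 4 statements merged into one kernel-verified Lean document; each statement's English description precedes it below -/
import Mathlib

section
/- Let M ∈ H(div div, Ω; S) and v ∈ H²(Ω). Then the trace pairing ⟨tr_{dDiv}(M), v⟩ := (div div M, v)_{L²} − (M, ∇∇v)_{L²} satisfies the bound B ⟨tr_{dDiv}(M), v⟩ ≤ ‖M‖_{div div} ‖v‖_{Ggrad}, where ‖v‖²_{Ggrad} = m‖v‖² + B‖∇∇v + q²Tv‖² and ‖M‖²_{div div} = B‖M‖² + (B²/m)‖div div M + q² T:M‖². -/
open scoped InnerProductSpace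

/- STATEMENT 5 (Lemma 3.1(ii)): boundedness of the trace pairing
B ⟨tr_dDiv(M), v⟩ ≤ ‖M‖_{div div} ‖v‖_{Ggrad}.
Here 𝕊 plays the role of L²(Ω;S) and 𝕃 of L²(Ω); a tensor M ∈ H(div div,Ω;S) is
represented by its L² part Mt and its iterated divergence Md, and v ∈ H²(Ω) by its
L² part v0 and its Hessian vh.  Tc is M ↦ T:M and Tm is v ↦ Tv, which are adjoint
since T is symmetric. -/
theorem stmt_5 {𝕊 𝕃 : Type*} [NormedAddCommGroup 𝕊] [InnerProductSpace ℝ 𝕊]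
    [NormedAddCommGroup 𝕃] [InnerProductSpace ℝ 𝕃]
    (B m q : ℝ) (hB : 0 < B) (hB1 : B ≤ 1) (hm : 0 < m) (hq : 0 < q)
    (Tc : 𝕊 →L[ℝ] 𝕃) (Tm : 𝕃 →L[ℝ] 𝕊)
    (hadj : ∀ (N : 𝕊) (w : 𝕃), ⟪Tc N, w⟫_ℝ = ⟪N, Tm w⟫_ℝ)
    (Mt : 𝕊) (Md : 𝕃) (v0 : 𝕃) (vh : 𝕊) :
    B * (⟪Md, v0⟫_ℝ - ⟪Mt, vh⟫_ℝ) ≤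
      Real.sqrt (B * ‖Mt‖ ^ 2 + B ^ 2 / m * ‖Md + q ^ 2 • Tc Mt‖ ^ 2) *
        Real.sqrt (m * ‖v0‖ ^ 2 + B * ‖vh + q ^ 2 • Tm v0‖ ^ 2) := by
  set X := Md + q ^ 2 • Tc Mt with hX
  set Y := vh + q ^ 2 • Tm v0 with hY
  have key : ⟪Md, v0⟫_ℝ - ⟪Mt, vh⟫_ℝ = ⟪X, v0⟫_ℝ - ⟪Mt, Y⟫_ℝ := by
    simp [hX, hY, inner_add_left, inner_add_right, real_inner_smul_left,
      real_inner_smul_right, hadj]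
  rw [key]
  have h1 : ⟪X, v0⟫_ℝ ≤ ‖X‖ * ‖v0‖ := real_inner_le_norm X v0
  have h2 : -⟪Mt, Y⟫_ℝ ≤ ‖Mt‖ * ‖Y‖ := by
    have := abs_real_inner_le_norm Mt Y
    have := neg_abs_le (⟪Mt, Y⟫_ℝ)
    linarith
  have step1 : B * (⟪X, v0⟫_ℝ - ⟪Mt, Y⟫_ℝ) ≤ B * (‖X‖ * ‖v0‖ + ‖Mt‖ * ‖Y‖) := by
    have : ⟪X, v0⟫_ℝ - ⟪Mt, Y⟫_ℝ ≤ ‖X‖ * ‖v0‖ + ‖Mt‖ * ‖Y‖ := by linarith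
    exact mul_le_mul_of_nonneg_left this hB.le
  refine step1.trans ?_
  set a := ‖Mt‖; set x := ‖X‖; set v := ‖v0‖; set y := ‖Y‖
  have ha : 0 ≤ a := norm_nonneg _
  have hx : 0 ≤ x := norm_nonneg _
  have hv : 0 ≤ v := norm_nonneg _
  have hy : 0 ≤ y := norm_nonneg _
  have hP : 0 ≤ B * a ^ 2 + B ^ 2 / m * x ^ 2 := by positivity
  have hQ : 0 ≤ m * v ^ 2 + B * y ^ 2 := by positivity
  rw [← Real.sqrt_mul hP]
  rw [show B * (x * v + a * y) = √((B * (x * v + a * y)) ^ 2) by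
    rw [Real.sqrt_sq (by positivity)]]
  apply Real.sqrt_le_sqrt
  have hmm : 0 < m := hm
  rw [div_mul_eq_mul_div, ← sub_nonneg]
  have expand : B * a ^ 2 * (m * v ^ 2 + B * y ^ 2) +
      B ^ 2 * x ^ 2 / m * (m * v ^ 2 + B * y ^ 2) -
      (B * (x * v + a * y)) ^ 2 =
      (B / m) * (m * a * v - B * x * y) ^ 2 := by
    field_simp
    ring
  have : B * a ^ 2 * (m * v ^ 2 + B * y ^ 2) +
      B ^ 2 * x ^ 2 / m * (m * v ^ 2 + B * y ^ 2) -
      (B * (x * v + a * y)) ^ 2 ≥ 0 := by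
    rw [expand]
    positivity
  linarith [this]
end

section
/- Under the assumptions of the linear model, the problem: find M ∈ H(div div, Ω; S) with the prescribed essential trace condition ⟨tr_{dDiv}(M), δu⟩ = ⟨tr_{dDiv}(G), δu⟩ for all δu ∈ H²_D(Ω), and satisfying ⟨M, δM⟩_{div div} = (B/m)(f, div div δM + q² T:δM) − B⟨tr_{Ggrad}(g), δM⟩ for all δM ∈ H_N(div div, Ω; S), has a unique solution M with ‖M‖_{div div} ≤ (1/√m)‖f‖ + 2‖G‖_{div div} + ‖g‖_{Ggrad}. -/
open scoped InnerProductSpace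

/- STATEMENT 7 (Theorem 4.1, well-posedness): the variational problem (probM1)-(probM2)
has a unique solution M with ‖M‖_{div div} ≤ (1/√m)‖f‖ + 2‖G‖_{div div} + ‖g‖_{Ggrad}.
X is the Hilbert space H(div div,Ω;S), whose inner product is the ⟨·,·⟩_{div div}
product (hypothesis hX); ι is the inclusion X → L²(Ω;S) ≅ 𝕊, D = div div : X → L²(Ω) ≅ 𝕃;
V is H²(Ω) with inclusion jv and Hessian hs; VD is the subspace H²_D(Ω);
the trace pairing trD is (div div M, v) − (M, ∇∇v); H_N is encoded by the condition
∀ v ∈ VD, trD δM v = 0. -/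

private lemma le_of_sq_le' {a b : ℝ} (ha : 0 ≤ a) (hb : 0 ≤ b) (h : a^2 ≤ b^2) : a ≤ b := by
  nlinarith

private lemma cs2 (c₁ c₂ a b a' b' : ℝ) (h₁ : 0 ≤ c₁) (h₂ : 0 ≤ c₂) :
    c₁*(a*b) + c₂*(a'*b') ≤ Real.sqrt (c₁*a^2 + c₂*a'^2) * Real.sqrt (c₁*b^2 + c₂*b'^2) := by
  have hA : (0:ℝ) ≤ c₁*a^2 + c₂*a'^2 := by positivity
  rw [← Real.sqrt_mul hA]
  rcases le_or_gt (c₁*(a*b) + c₂*(a'*b')) 0 with h | h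
  · exact h.trans (Real.sqrt_nonneg _)
  · rw [show c₁*(a*b) + c₂*(a'*b') = Real.sqrt ((c₁*(a*b) + c₂*(a'*b'))^2) from
      (Real.sqrt_sq h.le).symm]
    apply Real.sqrt_le_sqrt
    nlinarith [sq_nonneg (a*b' - a'*b), mul_nonneg h₁ h₂]


set_option maxHeartbeats 1600000 in
theorem stmt_7 {𝕊 𝕃 X V : Type*}
    [NormedAddCommGroup 𝕊] [InnerProductSpace ℝ 𝕊]
    [NormedAddCommGroup 𝕃] [InnerProductSpace ℝ 𝕃]
    [NormedAddCommGroup X] [InnerProductSpace ℝ X] [CompleteSpace X]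
    [AddCommGroup V] [Module ℝ V]
    (B m q : ℝ) (hB : 0 < B) (hB1 : B ≤ 1) (hm : 0 < m) (hq : 0 < q)
    (ι : X →L[ℝ] 𝕊) (D : X →L[ℝ] 𝕃)
    (Tc : 𝕊 →L[ℝ] 𝕃) (Tm : 𝕃 →L[ℝ] 𝕊)
    (hadj : ∀ (N : 𝕊) (w : 𝕃), ⟪Tc N, w⟫_ℝ = ⟪N, Tm w⟫_ℝ)
    (hX : ∀ M N : X, ⟪M, N⟫_ℝ =
      B * ⟪ι M, ι N⟫_ℝ +
        B ^ 2 / m * ⟪D M + q ^ 2 • Tc (ι M), D N + q ^ 2 • Tc (ι N)⟫_ℝ)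
    (jv : V →ₗ[ℝ] 𝕃) (hs : V →ₗ[ℝ] 𝕊) (VD : Submodule ℝ V)
    (trD : X → V → ℝ)
    (htrD : ∀ (M : X) (v : V), trD M v = ⟪D M, jv v⟫_ℝ - ⟪ι M, hs v⟫_ℝ)
    (f : 𝕃) (g : V) (G : X) :
    (∃! M : X,
      (∀ v ∈ VD, trD M v = trD G v) ∧
      (∀ δM : X, (∀ v ∈ VD, trD δM v = 0) →
        ⟪M, δM⟫_ℝ = B / m * ⟪f, D δM + q ^ 2 • Tc (ι δM)⟫_ℝ
          - B * (⟪D δM, jv g⟫_ℝ - ⟪ι δM, hs g⟫_ℝ))) ∧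
    (∀ M : X,
      ((∀ v ∈ VD, trD M v = trD G v) ∧
       (∀ δM : X, (∀ v ∈ VD, trD δM v = 0) →
         ⟪M, δM⟫_ℝ = B / m * ⟪f, D δM + q ^ 2 • Tc (ι δM)⟫_ℝ
           - B * (⟪D δM, jv g⟫_ℝ - ⟪ι δM, hs g⟫_ℝ))) →
      ‖M‖ ≤ (1 / Real.sqrt m) * ‖f‖ + 2 * ‖G‖ +
        Real.sqrt (m * ‖jv g‖ ^ 2 + B * ‖hs g + q ^ 2 • Tm (jv g)‖ ^ 2)) := by
  -- notation
  set p : 𝕊 := hs g + q ^ 2 • Tm (jv g) with hp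
  -- the subspace K = H_N
  set K : Submodule ℝ X :=
    { carrier := {x | ∀ v ∈ VD, ⟪D x, jv v⟫_ℝ - ⟪ι x, hs v⟫_ℝ = 0}
      add_mem' := by
        intro a b ha hb v hv
        have h1 := ha v hv
        have h2 := hb v hv
        simp only [map_add, inner_add_left]
        linarith
      zero_mem' := by intro v hv; simp
      smul_mem' := by
        intro c x hx v hv
        have h1 := hx v hv
        simp only [map_smul, real_inner_smul_left]
        linear_combination c * h1 } with hK
  have hKmem : ∀ x : X, x ∈ K ↔ ∀ v ∈ VD, ⟪D x, jv v⟫_ℝ - ⟪ι x, hs v⟫_ℝ = 0 := by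
    intro x; rfl
  have hKtr : ∀ x : X, (∀ v ∈ VD, trD x v = 0) ↔ x ∈ K := by
    intro x
    simp only [htrD, hKmem]
  have hKtr2 : ∀ M' : X, (∀ v ∈ VD, trD M' v = trD G v) ↔ M' - G ∈ K := by
    intro M'
    simp only [htrD, hKmem, map_sub, inner_sub_left]
    constructor
    · intro h v hv; have := h v hv; linarith
    · intro h v hv; have := h v hv; linarith
  -- K is closed
  have hKc : IsClosed (K : Set X) := by
    have hset : (K : Set X) = ⋂ v ∈ VD, {x : X | ⟪D x, jv v⟫_ℝ - ⟪ι x, hs v⟫_ℝ = 0} := by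
      ext x
      simp only [SetLike.mem_coe, hKmem, Set.mem_iInter, Set.mem_setOf_eq]
    rw [hset]
    exact isClosed_biInter fun v hv =>
      isClosed_eq ((D.continuous.inner continuous_const).sub
        (ι.continuous.inner continuous_const)) continuous_const
  haveI : CompleteSpace K := hKc.completeSpace_coe
  -- the functional ℓ
  set EE : X →L[ℝ] 𝕃 := D + (q ^ 2 : ℝ) • (Tc.comp ι) with hEE
  have hEEx : ∀ x : X, EE x = D x + q ^ 2 • Tc (ι x) := by
    intro x; simp [hEE]
  set l : X →L[ℝ] ℝ :=
    (B / m) • ((innerSL ℝ f).comp EE)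
      - B • ((innerSL ℝ (jv g)).comp D - (innerSL ℝ (hs g)).comp ι) with hl
  have hlx : ∀ x : X, l x = B / m * ⟪f, D x + q ^ 2 • Tc (ι x)⟫_ℝ
      - B * (⟪D x, jv g⟫_ℝ - ⟪ι x, hs g⟫_ℝ) := by
    intro x
    simp only [hl, ContinuousLinearMap.sub_apply, ContinuousLinearMap.smul_apply,
      ContinuousLinearMap.comp_apply, innerSL_apply_apply, smul_eq_mul, hEEx]
    rw [real_inner_comm (jv g) (D x), real_inner_comm (hs g) (ι x)]
  -- Riesz representative
  set L : X := (InnerProductSpace.toDual ℝ X).symm l with hLdef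
  have hL : ∀ x : X, ⟪L, x⟫_ℝ = l x := fun x => InnerProductSpace.toDual_symm_apply
  -- candidate solution
  set P : X := (K.orthogonalProjectionOnto (L - G) : X) with hPdef
  have hPK : P ∈ K := SetLike.coe_mem _
  set M₀ : X := G + P with hM₀
  have hortho : ∀ w : X, w ∈ K → ⟪(L - G) - P, w⟫_ℝ = 0 := fun w hw =>
    K.starProjection_inner_eq_zero (L - G) w hw
  -- M₀ satisfies the conditions
  have hcond1 : ∀ v ∈ VD, trD M₀ v = trD G v := by
    rw [hKtr2]
    have : M₀ - G = P := by rw [hM₀]; abel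
    rw [this]; exact hPK
  have hcond2 : ∀ δM : X, (∀ v ∈ VD, trD δM v = 0) →
      ⟪M₀, δM⟫_ℝ = B / m * ⟪f, D δM + q ^ 2 • Tc (ι δM)⟫_ℝ
        - B * (⟪D δM, jv g⟫_ℝ - ⟪ι δM, hs g⟫_ℝ) := by
    intro δM hδ
    rw [← hlx, ← hL]
    have hδK : δM ∈ K := (hKtr δM).1 hδ
    have h0 := hortho δM hδK
    have : M₀ - L = -((L - G) - P) := by rw [hM₀]; abel
    have h1 : ⟪M₀ - L, δM⟫_ℝ = 0 := by rw [this, inner_neg_left, h0, neg_zero]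
    rw [inner_sub_left] at h1
    linarith
  -- uniqueness
  have huniq : ∀ M' : X,
      ((∀ v ∈ VD, trD M' v = trD G v) ∧
       (∀ δM : X, (∀ v ∈ VD, trD δM v = 0) →
         ⟪M', δM⟫_ℝ = B / m * ⟪f, D δM + q ^ 2 • Tc (ι δM)⟫_ℝ
           - B * (⟪D δM, jv g⟫_ℝ - ⟪ι δM, hs g⟫_ℝ))) → M' = M₀ := by
    intro M' ⟨h1, h2⟩
    have hd : M' - M₀ ∈ K := by
      have a1 : M' - G ∈ K := (hKtr2 M').1 h1
      have a2 : M₀ - G ∈ K := (hKtr2 M₀).1 hcond1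
      have : M' - M₀ = (M' - G) - (M₀ - G) := by abel
      rw [this]; exact K.sub_mem a1 a2
    have hdtr : ∀ v ∈ VD, trD (M' - M₀) v = 0 := (hKtr _).2 hd
    have e1 := h2 (M' - M₀) hdtr
    have e2 := hcond2 (M' - M₀) hdtr
    have : ⟪M' - M₀, M' - M₀⟫_ℝ = 0 := by
      rw [inner_sub_left]; linarith
    exact sub_eq_zero.mp (inner_self_eq_zero.mp this)
  -- norm identity
  have hnorm : ∀ x : X, ‖x‖ ^ 2 = B * ‖ι x‖ ^ 2 + B ^ 2 / m * ‖EE x‖ ^ 2 := by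
    intro x
    have h := hX x x
    rw [real_inner_self_eq_norm_sq, real_inner_self_eq_norm_sq,
      real_inner_self_eq_norm_sq] at h
    rw [h, hEEx]
  set sm : ℝ := Real.sqrt m with hsm
  have hsm2 : sm ^ 2 = m := Real.sq_sqrt hm.le
  have hsmpos : 0 < sm := Real.sqrt_pos.2 hm
  set C2 : ℝ := Real.sqrt (m * ‖jv g‖ ^ 2 + B * ‖p‖ ^ 2) with hC2
  -- bound on the functional
  have hlbound : ∀ x : X, l x ≤ (1 / sm * ‖f‖ + C2) * ‖x‖ := by
    intro x
    -- rewrite l x using EE and the adjoint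
    have hDx : D x = EE x - q ^ 2 • Tc (ι x) := by rw [hEEx]; abel
    have hsplit : l x = B / m * ⟪f, EE x⟫_ℝ
        + (B * ⟪ι x, p⟫_ℝ - B * ⟪EE x, jv g⟫_ℝ) := by
      rw [hlx, ← hEEx, hDx, inner_sub_left, real_inner_smul_left, hadj, hp,
        inner_add_right, real_inner_smul_right]
      ring
    -- bound ‖EE x‖ and ‖ι x‖
    have hEb : ‖EE x‖ ≤ sm / B * ‖x‖ := by
      apply le_of_sq_le' (norm_nonneg _) (by positivity)
      have h := hnorm x
      have h2 : (sm / B * ‖x‖) ^ 2 = m / B ^ 2 * ‖x‖ ^ 2 := by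
        rw [mul_pow, div_pow, hsm2]
      have h3 : m * ‖x‖ ^ 2 = m * B * ‖ι x‖ ^ 2 + B ^ 2 * ‖EE x‖ ^ 2 := by
        rw [h]; field_simp
      rw [h2, div_mul_eq_mul_div, le_div_iff₀ (by positivity), h3]
      nlinarith [mul_nonneg (mul_nonneg hm.le hB.le) (sq_nonneg ‖ι x‖)]
    have term1 : B / m * ⟪f, EE x⟫_ℝ ≤ 1 / sm * ‖f‖ * ‖x‖ := by
      have c1 : ⟪f, EE x⟫_ℝ ≤ ‖f‖ * ‖EE x‖ := real_inner_le_norm f (EE x)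
      have c2 : ‖f‖ * ‖EE x‖ ≤ ‖f‖ * (sm / B * ‖x‖) :=
        mul_le_mul_of_nonneg_left hEb (norm_nonneg f)
      have hinv : 1 / sm = sm / m := by
        rw [div_eq_div_iff hsmpos.ne' hm.ne', one_mul, ← sq, hsm2]
      have c3 : B / m * (‖f‖ * (sm / B * ‖x‖)) = 1 / sm * ‖f‖ * ‖x‖ := by
        rw [hinv]; field_simp
      calc B / m * ⟪f, EE x⟫_ℝ ≤ B / m * (‖f‖ * (sm / B * ‖x‖)) := by
            apply mul_le_mul_of_nonneg_left (c1.trans c2) (by positivity)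
        _ = 1 / sm * ‖f‖ * ‖x‖ := c3
    have term2 : B * ⟪ι x, p⟫_ℝ - B * ⟪EE x, jv g⟫_ℝ ≤ C2 * ‖x‖ := by
      have c1 : ⟪ι x, p⟫_ℝ ≤ ‖ι x‖ * ‖p‖ := real_inner_le_norm _ _
      have c2 : - ⟪EE x, jv g⟫_ℝ ≤ ‖EE x‖ * ‖jv g‖ := by
        have := abs_real_inner_le_norm (EE x) (jv g)
        have := neg_abs_le ⟪EE x, jv g⟫_ℝ
        linarith
      have key := cs2 B (B ^ 2 / m) (‖ι x‖) (‖p‖) (‖EE x‖) (m / B * ‖jv g‖)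
        hB.le (by positivity)
      have e1 : B * ‖ι x‖ ^ 2 + B ^ 2 / m * ‖EE x‖ ^ 2 = ‖x‖ ^ 2 := (hnorm x).symm
      have e2 : B * ‖p‖ ^ 2 + B ^ 2 / m * (m / B * ‖jv g‖) ^ 2
          = m * ‖jv g‖ ^ 2 + B * ‖p‖ ^ 2 := by
        field_simp; ring
      rw [e1, e2, Real.sqrt_sq (norm_nonneg x)] at key
      have e3 : B ^ 2 / m * (‖EE x‖ * (m / B * ‖jv g‖)) = B * (‖EE x‖ * ‖jv g‖) := by
        field_simp
      calc B * ⟪ι x, p⟫_ℝ - B * ⟪EE x, jv g⟫_ℝ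
          ≤ B * (‖ι x‖ * ‖p‖) + B * (‖EE x‖ * ‖jv g‖) := by nlinarith
        _ = B * (‖ι x‖ * ‖p‖) + B ^ 2 / m * (‖EE x‖ * (m / B * ‖jv g‖)) := by rw [e3]
        _ ≤ ‖x‖ * Real.sqrt (m * ‖jv g‖ ^ 2 + B * ‖p‖ ^ 2) := key
        _ = C2 * ‖x‖ := by rw [hC2, mul_comm]
    rw [hsplit]; nlinarith [norm_nonneg x]
  -- the a priori bound
  have hbound : ∀ M : X,
      ((∀ v ∈ VD, trD M v = trD G v) ∧
       (∀ δM : X, (∀ v ∈ VD, trD δM v = 0) →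
         ⟪M, δM⟫_ℝ = B / m * ⟪f, D δM + q ^ 2 • Tc (ι δM)⟫_ℝ
           - B * (⟪D δM, jv g⟫_ℝ - ⟪ι δM, hs g⟫_ℝ))) →
      ‖M‖ ≤ 1 / sm * ‖f‖ + 2 * ‖G‖ + C2 := by
    intro M ⟨h1, h2⟩
    set w : X := M - G with hw
    have hwK : w ∈ K := (hKtr2 M).1 h1
    have hwtr : ∀ v ∈ VD, trD w v = 0 := (hKtr w).2 hwK
    have e1 : ⟪M, w⟫_ℝ = l w := by rw [h2 w hwtr, hlx]
    have e2 : ‖w‖ ^ 2 = l w - ⟪G, w⟫_ℝ := by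
      rw [← real_inner_self_eq_norm_sq, hw, inner_sub_left, ← hw, e1]
    have e3 : - ⟪G, w⟫_ℝ ≤ ‖G‖ * ‖w‖ := by
      have := abs_real_inner_le_norm G w
      have := neg_abs_le ⟪G, w⟫_ℝ
      linarith
    have e4 : ‖w‖ ^ 2 ≤ (1 / sm * ‖f‖ + C2 + ‖G‖) * ‖w‖ := by
      have := hlbound w
      rw [e2]; nlinarith
    have hC2n : 0 ≤ C2 := Real.sqrt_nonneg _
    have hCf : 0 ≤ 1 / sm * ‖f‖ := by positivity
    have e5 : ‖w‖ ≤ 1 / sm * ‖f‖ + C2 + ‖G‖ := by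
      rcases eq_or_lt_of_le (norm_nonneg w) with h0 | h0
      · rw [← h0]; positivity
      · nlinarith
    have e6 : ‖M‖ ≤ ‖w‖ + ‖G‖ := by
      have : M = w + G := by rw [hw]; abel
      rw [this]; exact norm_add_le w G
    linarith
  refine ⟨⟨M₀, ⟨hcond1, hcond2⟩, huniq⟩, ?_⟩
  intro M hM
  exact hbound M hM
end

section
/- Under the relation M = ∇∇u + q²Tu with u given by the postprocessing formula u = (1/m)f − (B/m)(div div M + q²T:M), the energy norm of u is bounded by ‖u‖_{Ggrad} ≤ (1/√m)‖f‖ + √2 ‖M‖_{div div}. -/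
set_option maxHeartbeats 1600000


/- STATEMENT 10: if M = ∇∇u + q²Tu and u = (1/m)f − (B/m)(div div M + q²T:M), then
‖u‖_{Ggrad} ≤ (1/√m)‖f‖ + √2 ‖M‖_{div div}.
u0 = u ∈ L²(Ω), uh = ∇∇u its Hessian, Mt the L² part of M, Md = div div M;
Tc : N ↦ T:N and Tm : v ↦ Tv. -/
theorem stmt_10 {𝕊 𝕃 : Type*} [NormedAddCommGroup 𝕊] [InnerProductSpace ℝ 𝕊]
    [NormedAddCommGroup 𝕃] [InnerProductSpace ℝ 𝕃]
    (B m q : ℝ) (hB : 0 < B) (hB1 : B ≤ 1) (hm : 0 < m) (hq : 0 < q)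
    (Tc : 𝕊 →L[ℝ] 𝕃) (Tm : 𝕃 →L[ℝ] 𝕊)
    (f : 𝕃) (u0 : 𝕃) (uh : 𝕊) (Mt : 𝕊) (Md : 𝕃)
    (hM : Mt = uh + q ^ 2 • Tm u0)
    (hu : u0 = (1 / m) • f - (B / m) • (Md + q ^ 2 • Tc Mt)) :
    Real.sqrt (m * ‖u0‖ ^ 2 + B * ‖uh + q ^ 2 • Tm u0‖ ^ 2)
      ≤ (1 / Real.sqrt m) * ‖f‖ +
        Real.sqrt 2 * Real.sqrt (B * ‖Mt‖ ^ 2 + B ^ 2 / m * ‖Md + q ^ 2 • Tc Mt‖ ^ 2) := by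
  rw [← hM]
  set F := ‖f‖ with hF
  set N := ‖Md + q ^ 2 • Tc Mt‖ with hN
  set t := ‖Mt‖ with ht
  have hF0 : 0 ≤ F := norm_nonneg _
  have hN0 : 0 ≤ N := norm_nonneg _
  have ht0 : 0 ≤ t := norm_nonneg _
  set sm := Real.sqrt m with hsm
  set s2 := Real.sqrt 2 with hs2
  have hsm0 : 0 < sm := Real.sqrt_pos.mpr hm
  have hsm2 : sm ^ 2 = m := Real.sq_sqrt hm.le
  have hs22 : s2 ^ 2 = 2 := Real.sq_sqrt (by norm_num)
  have hs21 : 1 ≤ s2 := by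
    rw [hs2]; nlinarith [Real.sq_sqrt (show (0:ℝ) ≤ 2 by norm_num),
      Real.sqrt_nonneg 2]
  set S := Real.sqrt (B * t ^ 2 + B ^ 2 / m * N ^ 2) with hS
  have harg0 : 0 ≤ B * t ^ 2 + B ^ 2 / m * N ^ 2 := by positivity
  have hS0 : 0 ≤ S := Real.sqrt_nonneg _
  have hS2 : S ^ 2 = B * t ^ 2 + B ^ 2 / m * N ^ 2 := Real.sq_sqrt harg0
  -- bound on ‖u0‖
  have hu0 : ‖u0‖ ≤ (1 / m) * F + (B / m) * N := by
    calc ‖u0‖ = ‖(1 / m) • f - (B / m) • (Md + q ^ 2 • Tc Mt)‖ := by rw [← hu]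
      _ ≤ ‖(1 / m) • f‖ + ‖(B / m) • (Md + q ^ 2 • Tc Mt)‖ := norm_sub_le _ _
      _ = (1 / m) * F + (B / m) * N := by
          rw [norm_smul, norm_smul, Real.norm_eq_abs, Real.norm_eq_abs,
            abs_of_pos (by positivity), abs_of_pos (by positivity)]
  have hmu : m * ‖u0‖ ≤ F + B * N := by
    have := mul_le_mul_of_nonneg_left hu0 hm.le
    calc m * ‖u0‖ ≤ m * ((1 / m) * F + (B / m) * N) := this
      _ = F + B * N := by field_simp
  have hu00 : 0 ≤ ‖u0‖ := norm_nonneg _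
  -- sm * S ≥ B * N
  have hSN : B * N ≤ sm * S := by
    have h1 : (B * N) ^ 2 ≤ (sm * S) ^ 2 := by
      have : (sm * S) ^ 2 = m * (B * t ^ 2 + B ^ 2 / m * N ^ 2) := by
        rw [mul_pow, hsm2, hS2]
      rw [this]
      have : m * (B * t ^ 2 + B ^ 2 / m * N ^ 2) = m * B * t ^ 2 + B ^ 2 * N ^ 2 := by
        field_simp
      rw [this]
      nlinarith [mul_nonneg (mul_nonneg hm.le hB.le) (sq_nonneg t)]
    have h2 : 0 ≤ sm * S := mul_nonneg hsm0.le hS0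
    nlinarith [mul_nonneg (mul_nonneg hB.le hN0) hN0]
  -- key squared inequality (scaled by m)
  have key : m * (m * ‖u0‖ ^ 2 + B * t ^ 2) ≤ (F + sm * (s2 * S)) ^ 2 := by
    have hmu2 : (m * ‖u0‖) ^ 2 ≤ (F + B * N) ^ 2 :=
      pow_le_pow_left₀ (mul_nonneg hm.le hu00) hmu 2
    have hcross : 2 * (F * (B * N)) ≤ 2 * (F * (sm * (s2 * S))) := by
      have h1 : B * N ≤ sm * (s2 * S) := by
        calc B * N ≤ sm * S := hSN
          _ ≤ sm * (s2 * S) := by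
              have := mul_le_mul_of_nonneg_right hs21 hS0
              have := mul_le_mul_of_nonneg_left this hsm0.le
              simpa using this
      have := mul_le_mul_of_nonneg_left h1 hF0
      linarith
    have hmS2 : m * S ^ 2 = m * B * t ^ 2 + B ^ 2 * N ^ 2 := by
      rw [hS2]; field_simp
    have hR2 : (sm * (s2 * S)) ^ 2 = 2 * (m * B * t ^ 2 + B ^ 2 * N ^ 2) := by
      rw [mul_pow, mul_pow, hsm2, hs22, ← hmS2]; ring
    nlinarith [hmu2, hcross, hR2,
      mul_nonneg (mul_nonneg hm.le hB.le) (sq_nonneg t),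
      mul_nonneg (mul_nonneg hB.le hB.le) (sq_nonneg N)]
  -- conclude
  have hX0 : 0 ≤ m * ‖u0‖ ^ 2 + B * t ^ 2 := by positivity
  have hR0 : 0 ≤ F + sm * (s2 * S) := by positivity
  have h3 : Real.sqrt (m * (m * ‖u0‖ ^ 2 + B * t ^ 2)) ≤ F + sm * (s2 * S) := by
    calc Real.sqrt (m * (m * ‖u0‖ ^ 2 + B * t ^ 2))
        ≤ Real.sqrt ((F + sm * (s2 * S)) ^ 2) := Real.sqrt_le_sqrt key
      _ = F + sm * (s2 * S) := Real.sqrt_sq hR0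
  have h4 : Real.sqrt (m * (m * ‖u0‖ ^ 2 + B * t ^ 2))
      = sm * Real.sqrt (m * ‖u0‖ ^ 2 + B * t ^ 2) := Real.sqrt_mul hm.le _
  have h5 : sm * Real.sqrt (m * ‖u0‖ ^ 2 + B * t ^ 2) ≤ F + sm * (s2 * S) := by
    rw [← h4]; exact h3
  have h6 : Real.sqrt (m * ‖u0‖ ^ 2 + B * t ^ 2) ≤ (F + sm * (s2 * S)) / sm := by
    rw [le_div_iff₀ hsm0]
    nlinarith [h5]
  calc Real.sqrt (m * ‖u0‖ ^ 2 + B * t ^ 2) ≤ (F + sm * (s2 * S)) / sm := h6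
    _ = (1 / sm) * F + s2 * S := by field_simp
end

section
/- A priori convergence rate for the discrete tensor: if u ∈ H^s(Ω), M ∈ H^r(Ω; S) and div div M ∈ H^t(Ω) with s, t ∈ (0,2], r ∈ (3/2, 2], and the interpolation operator satisfies ‖M − Π M‖ ≤ C h^{min{r,2}}‖M‖_r and ‖div div(M − Π M)‖ ≤ C h^{min{t,2}}‖div div M‖_t, then the quasi-optimal Galerkin solution M_h satisfies ‖M − M_h‖_{div div} ≤ C h^{min{r,t}}(√B(1 + √(B/m) q²)‖M‖_r + (B/√m)‖div div M‖_t). -/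
/- STATEMENT 19 (Theorem 6.1, a priori convergence rate): if M ∈ H^r(Ω;S) and
div div M ∈ H^t(Ω) with t ∈ (0,2], r ∈ (3/2,2], the interpolant Π M satisfies the
stated interpolation error bounds (with constant Cint, which also bounds the action
of T), and M_h is the quasi-optimal Galerkin solution, then
‖M − M_h‖_{div div} ≤ C h^{min{r,t}} (√B(1 + √(B/m) q²)‖M‖_r + (B/√m)‖div div M‖_t)
with C > 0 independent of B, q, m and of the mesh (h = ‖h_T‖_∞ ≤ 1 the mesh size;
Mr = ‖M‖_{H^r}, Dt = ‖div div M‖_{H^t}).  Mt, Md (resp. PMt, PMd; Mht, Mhd) denote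
the L² part and iterated divergence of M (resp. Π M; M_h), and Tc is N ↦ T:N. -/
theorem stmt_19 {𝕊 𝕃 : Type*} [NormedAddCommGroup 𝕊] [InnerProductSpace ℝ 𝕊]
    [NormedAddCommGroup 𝕃] [InnerProductSpace ℝ 𝕃] :
    ∀ Cint : ℝ, 0 < Cint → ∃ C : ℝ, 0 < C ∧
      ∀ (B m q h r t Mr Dt : ℝ)
        (Tc : 𝕊 →L[ℝ] 𝕃) (Mt PMt Mht : 𝕊) (Md PMd Mhd : 𝕃),
        0 < B → B ≤ 1 → 0 < m → 0 < q → 0 < h → h ≤ 1 →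
        3 / 2 < r → r ≤ 2 → 0 < t → t ≤ 2 → 0 ≤ Mr → 0 ≤ Dt →
        (∀ N : 𝕊, ‖Tc N‖ ≤ Cint * ‖N‖) →
        ‖Mt - PMt‖ ≤ Cint * h ^ min r 2 * Mr →
        ‖Md - PMd‖ ≤ Cint * h ^ min t 2 * Dt →
        Real.sqrt (B * ‖Mt - Mht‖ ^ 2 +
            B ^ 2 / m * ‖(Md + q ^ 2 • Tc Mt) - (Mhd + q ^ 2 • Tc Mht)‖ ^ 2)
          ≤ Real.sqrt (B * ‖Mt - PMt‖ ^ 2 +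
              B ^ 2 / m * ‖(Md + q ^ 2 • Tc Mt) - (PMd + q ^ 2 • Tc PMt)‖ ^ 2) →
        Real.sqrt (B * ‖Mt - Mht‖ ^ 2 +
            B ^ 2 / m * ‖(Md + q ^ 2 • Tc Mt) - (Mhd + q ^ 2 • Tc Mht)‖ ^ 2)
          ≤ C * h ^ min r t *
              (Real.sqrt B * (1 + Real.sqrt (B / m) * q ^ 2) * Mr +
                B / Real.sqrt m * Dt) := by
  intro Cint hCint
  refine ⟨Cint + Cint ^ 2, by positivity, ?_⟩
  intro B m q h r t Mr Dt Tc Mt PMt Mht Md PMd Mhd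
  intro hB hB1 hm hq hh hh1 hr hr2 ht ht2 hMr hDt hTc hMP hDP hGal
  rw [min_eq_left hr2] at hMP
  rw [min_eq_left ht2] at hDP
  have hhr : h ^ r ≤ h ^ min r t :=
    Real.rpow_le_rpow_of_exponent_ge hh hh1 (min_le_left r t)
  have hht : h ^ t ≤ h ^ min r t :=
    Real.rpow_le_rpow_of_exponent_ge hh hh1 (min_le_right r t)
  have hhm : (0:ℝ) < h ^ min r t := Real.rpow_pos_of_pos hh _
  have hhrp : (0:ℝ) < h ^ r := Real.rpow_pos_of_pos hh _
  have hhtp : (0:ℝ) < h ^ t := Real.rpow_pos_of_pos hh _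
  set x := ‖Mt - PMt‖ with hx
  set y := ‖(Md + q ^ 2 • Tc Mt) - (PMd + q ^ 2 • Tc PMt)‖ with hy
  have hxnn : 0 ≤ x := norm_nonneg _
  have hynn : 0 ≤ y := norm_nonneg _
  have hsB : Real.sqrt B ^ 2 = B := Real.sq_sqrt hB.le
  have hsm : Real.sqrt m ^ 2 = m := Real.sq_sqrt hm.le
  have hsmpos : 0 < Real.sqrt m := Real.sqrt_pos.mpr hm
  have hsBpos : 0 < Real.sqrt B := Real.sqrt_pos.mpr hB
  have key : Real.sqrt (B * x ^ 2 + B ^ 2 / m * y ^ 2)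
      ≤ Real.sqrt B * x + B / Real.sqrt m * y := by
    have h2 : (B / Real.sqrt m) ^ 2 = B ^ 2 / m := by
      rw [div_pow, hsm]
    have h1 : B * x ^ 2 + B ^ 2 / m * y ^ 2
        ≤ (Real.sqrt B * x + B / Real.sqrt m * y) ^ 2 := by
      nlinarith [mul_nonneg (mul_nonneg hsBpos.le hxnn)
        (mul_nonneg (div_nonneg hB.le hsmpos.le) hynn)]
    calc Real.sqrt (B * x ^ 2 + B ^ 2 / m * y ^ 2)
        ≤ Real.sqrt ((Real.sqrt B * x + B / Real.sqrt m * y) ^ 2) :=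
          Real.sqrt_le_sqrt h1
      _ = Real.sqrt B * x + B / Real.sqrt m * y :=
          Real.sqrt_sq (by positivity)
  have hdiff : (Md + q ^ 2 • Tc Mt) - (PMd + q ^ 2 • Tc PMt)
      = (Md - PMd) + q ^ 2 • Tc (Mt - PMt) := by
    rw [map_sub, smul_sub]; abel
  have hy_bound : y ≤ Cint * h ^ t * Dt + q ^ 2 * (Cint * (Cint * h ^ r * Mr)) := by
    rw [hy, hdiff]
    calc ‖(Md - PMd) + q ^ 2 • Tc (Mt - PMt)‖
        ≤ ‖Md - PMd‖ + ‖q ^ 2 • Tc (Mt - PMt)‖ := norm_add_le _ _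
      _ = ‖Md - PMd‖ + q ^ 2 * ‖Tc (Mt - PMt)‖ := by
          rw [norm_smul, Real.norm_eq_abs, abs_of_nonneg (by positivity)]
      _ ≤ Cint * h ^ t * Dt + q ^ 2 * (Cint * ‖Mt - PMt‖) := by
          have := hTc (Mt - PMt)
          gcongr
      _ ≤ Cint * h ^ t * Dt + q ^ 2 * (Cint * (Cint * h ^ r * Mr)) := by
          gcongr
  have hsplit : Real.sqrt (B / m) = Real.sqrt B / Real.sqrt m :=
    Real.sqrt_div hB.le m
  have hBB : Real.sqrt B * Real.sqrt B = B := Real.mul_self_sqrt hB.le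
  refine le_trans hGal (le_trans key ?_)
  have hx_bound : x ≤ Cint * h ^ r * Mr := hMP
  have t1 : Real.sqrt B * x ≤ Real.sqrt B * (Cint * (h ^ min r t) * Mr) := by
    calc Real.sqrt B * x ≤ Real.sqrt B * (Cint * h ^ r * Mr) := by gcongr
      _ ≤ Real.sqrt B * (Cint * (h ^ min r t) * Mr) := by gcongr
  have t2 : B / Real.sqrt m * y ≤ B / Real.sqrt m *
      (Cint * (h ^ min r t) * Dt + q ^ 2 * (Cint * (Cint * (h ^ min r t) * Mr))) := by
    calc B / Real.sqrt m * y
        ≤ B / Real.sqrt m * (Cint * h ^ t * Dt + q ^ 2 * (Cint * (Cint * h ^ r * Mr))) := by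
          gcongr
      _ ≤ _ := by gcongr
  refine le_trans (add_le_add t1 t2) ?_
  rw [hsplit]
  have hexp : Real.sqrt B * (1 + Real.sqrt B / Real.sqrt m * q ^ 2) * Mr
      = Real.sqrt B * Mr + B / Real.sqrt m * q ^ 2 * Mr := by
    rw [show Real.sqrt B * (1 + Real.sqrt B / Real.sqrt m * q ^ 2) * Mr
        = Real.sqrt B * Mr + Real.sqrt B * Real.sqrt B / Real.sqrt m * q ^ 2 * Mr
      from by ring, hBB]
  rw [hexp]
  set a := h ^ min r t with ha
  set sB := Real.sqrt B with hsB'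
  set u := B / Real.sqrt m with hu
  have hun : 0 ≤ u := by rw [hu]; positivity
  have hre : (Cint + Cint ^ 2) * a * (sB * Mr + u * q ^ 2 * Mr + u * Dt)
      = (sB * (Cint * a * Mr) + u * (Cint * a * Dt + q ^ 2 * (Cint * (Cint * a * Mr))))
        + (Cint ^ 2 * a * sB * Mr + Cint * a * u * (q ^ 2 * Mr) + Cint ^ 2 * a * u * Dt) := by
    ring
  rw [hre]
  refine le_add_of_nonneg_right ?_
  have e1 : 0 ≤ Cint ^ 2 * a * sB * Mr :=
    mul_nonneg (mul_nonneg (mul_nonneg (sq_nonneg Cint) hhm.le) hsBpos.le) hMr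
  have e2 : 0 ≤ Cint * a * u * (q ^ 2 * Mr) :=
    mul_nonneg (mul_nonneg (mul_nonneg hCint.le hhm.le) hun)
      (mul_nonneg (sq_nonneg q) hMr)
  have e3 : 0 ≤ Cint ^ 2 * a * u * Dt :=
    mul_nonneg (mul_nonneg (mul_nonneg (sq_nonneg Cint) hhm.le) hun) hDt
  linarith
end
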